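/- (Explicit form of Proposition 6.2(a): adding a spurious candidate increases the Schwarz criterion.) Let n ≥ 1, ξ > 0, C' > 0, ω > 0. Let x_t = f_t + ε_t for t = 1, …, n, where ε satisfies the uniform interval bound with level ω. Let A ⊆ {1, …, n−1}, let c_∘ ∈ {1, …, n−1} \ A, and let c_- be the largest element of A ∪ {0} smaller than c_∘ and c_+ the smallest element of A ∪ {n} larger than c_∘. Assume f is constant on {c_-+1, …, c_+} (no change point in the local window), that C' n ≤ RSS(A ∪ {c_∘}; x), and that ξ > 2ω²/C'. Then SC(A; x) < SC(A ∪ {c_∘}; x). -/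

import Mathlib

open Finset

/-- Mean of `x` over the interval `(s, e]`. -/
noncomputable def segMean (x : ℕ → ℝ) (s e : ℕ) : ℝ :=
  (∑ t ∈ Finset.Ioc s e, x t) / ((e : ℝ) - (s : ℝ))

/-- CUSUM statistic of `x` at split point `b` on the interval `(s, e]`. -/
noncomputable def cusum (x : ℕ → ℝ) (s b e : ℕ) : ℝ :=
  Real.sqrt (((b : ℝ) - s) * ((e : ℝ) - b) / ((e : ℝ) - s)) *
    (segMean x s b - segMean x b e)

/-- Largest element of `A ∪ {0}` that is `< t`. -/
def lbd (A : Finset ℕ) (t : ℕ) : ℕ :=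
  WithBot.unbotD 0 ((insert 0 A).filter (fun a => a < t)).max

/-- Smallest element of `A ∪ {n}` that is `≥ t`. -/
def ubd (A : Finset ℕ) (n t : ℕ) : ℕ :=
  WithTop.untopD n (((insert n A).filter (fun a => t ≤ a)).min)

/-- Residual sum of squares of `x_1, …, x_n` with respect to the segmentation
of `{1, …, n}` induced by the set of change point candidates `A`:
each `t` lies in the segment `(lbd A t, ubd A n t]`. -/
noncomputable def RSS (x : ℕ → ℝ) (n : ℕ) (A : Finset ℕ) : ℝ :=
  ∑ t ∈ Finset.Icc 1 n, (x t - segMean x (lbd A t) (ubd A n t)) ^ 2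

/-- Schwarz criterion with penalty `ξ`. -/
noncomputable def SC (x : ℕ → ℝ) (n : ℕ) (ξ : ℝ) (A : Finset ℕ) : ℝ :=
  ((n : ℝ) / 2) * Real.log (RSS x n A / n) + (A.card : ℝ) * ξ

/-- `ε_1, …, ε_n` satisfies the uniform interval bound with level `ω`:
`|∑_{t=s+1}^e ε_t| ≤ ω √(e − s)` for all `0 ≤ s < e ≤ n`. -/
def UIB (ε : ℕ → ℝ) (n : ℕ) (ω : ℝ) : Prop :=
  ∀ s e : ℕ, s < e → e ≤ n →
    |∑ t ∈ Finset.Ioc s e, ε t| ≤ ω * Real.sqrt ((e : ℝ) - s)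

lemma lbd_eq_of (A : Finset ℕ) (t m : ℕ) (hm : m ∈ insert 0 A) (hmt : m < t)
    (hmax : ∀ a ∈ insert 0 A, a < t → a ≤ m) : lbd A t = m := by
  have h : ((insert 0 A).filter (fun a => a < t)).max = (m : WithBot ℕ) := by
    apply le_antisymm
    · exact Finset.max_le (fun a ha => by
        simp only [Finset.mem_filter] at ha
        exact WithBot.coe_le_coe.mpr (hmax a ha.1 ha.2))
    · exact Finset.le_max (Finset.mem_filter.mpr ⟨hm, hmt⟩)
  rw [lbd, h]; rfl

lemma ubd_eq_of (A : Finset ℕ) (n t m : ℕ) (hm : m ∈ insert n A) (hmt : t ≤ m)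
    (hmin : ∀ a ∈ insert n A, t ≤ a → m ≤ a) : ubd A n t = m := by
  have h : ((insert n A).filter (fun a => t ≤ a)).min = (m : WithTop ℕ) := by
    apply le_antisymm
    · exact Finset.min_le (Finset.mem_filter.mpr ⟨hm, hmt⟩)
    · exact Finset.le_min (fun a ha => by
        simp only [Finset.mem_filter] at ha
        exact WithTop.coe_le_coe.mpr (hmin a ha.1 ha.2))
  rw [ubd, h]; rfl

lemma sum_eq_mean (x : ℕ → ℝ) (s e : ℕ) (h : s < e) :
    ∑ t ∈ Finset.Ioc s e, x t = ((e:ℝ) - s) * segMean x s e := by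
  have hne : ((e:ℝ) - s) ≠ 0 := by
    have : (s:ℝ) < e := by exact_mod_cast h
    linarith
  rw [segMean, mul_div_cancel₀ _ hne]

lemma sum_sq_dev (x : ℕ → ℝ) (s e : ℕ) (h : s < e) (m : ℝ) :
    ∑ t ∈ Finset.Ioc s e, (x t - m)^2
      = ∑ t ∈ Finset.Ioc s e, (x t - segMean x s e)^2
        + ((e:ℝ) - s) * (segMean x s e - m)^2 := by
  have hc : (((Finset.Ioc s e).card : ℕ) : ℝ) = (e:ℝ) - s := by
    rw [Nat.card_Ioc, Nat.cast_sub h.le]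
  have hS := sum_eq_mean x s e h
  set μ := segMean x s e with hμ
  have expand : ∀ t ∈ Finset.Ioc s e, (x t - m)^2
      = (x t - μ)^2 + (2*(μ-m)) * x t + ((μ-m)*(-(m+μ))) := fun t _ => by ring
  rw [Finset.sum_congr rfl expand, Finset.sum_add_distrib, Finset.sum_add_distrib,
    ← Finset.mul_sum, Finset.sum_const, hS, nsmul_eq_mul, hc]
  ring

lemma alg_two_omega (a b ω : ℝ) (ha : 0 < a) (hb : 0 < b) :
    a^2 * b^2 / (a^2 + b^2) * (ω / a + ω / b)^2 ≤ 2 * ω^2 := by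
  rw [div_mul_eq_mul_div, div_le_iff₀ (add_pos (pow_pos ha 2) (pow_pos hb 2))]
  have h1 : a^2 * b^2 * (ω / a + ω / b)^2 = ω^2 * (a + b)^2 := by
    field_simp
    ring
  rw [h1]
  nlinarith [sq_nonneg (ω * a - ω * b)]

lemma alg_gain (L₁ L₂ μ₁ μ₂ μ : ℝ) (h1 : 0 < L₁) (h2 : 0 < L₂)
    (hμ : (L₁ + L₂) * μ = L₁ * μ₁ + L₂ * μ₂) :
    L₁ * (μ₁ - μ)^2 + L₂ * (μ₂ - μ)^2 = L₁ * L₂ / (L₁ + L₂) * (μ₁ - μ₂)^2 := by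
  have hL : (0:ℝ) < L₁ + L₂ := add_pos h1 h2
  have hμeq : μ = (L₁ * μ₁ + L₂ * μ₂) / (L₁ + L₂) := by
    rw [eq_div_iff hL.ne', mul_comm]
    exact hμ
  rw [hμeq]
  field_simp
  ring

lemma sc_final (R R' nn ξ C' ω : ℝ) (hn : 1 ≤ nn) (hC' : 0 < C') (hω : 0 < ω)
    (hR' : C' * nn ≤ R') (hD0 : R' ≤ R) (hD2 : R - R' ≤ 2 * ω^2)
    (hξ : 2 * ω^2 / C' < ξ) :
    (nn/2) * Real.log (R/nn) < (nn/2) * Real.log (R'/nn) + ξ := by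
  have hnpos : (0:ℝ) < nn := lt_of_lt_of_le one_pos hn
  have hR'pos : 0 < R' := lt_of_lt_of_le (mul_pos hC' hnpos) hR'
  have hRpos : 0 < R := lt_of_lt_of_le hR'pos hD0
  have hlog : Real.log (R/nn) - Real.log (R'/nn) ≤ (R - R') / R' := by
    rw [Real.log_div hRpos.ne' hnpos.ne', Real.log_div hR'pos.ne' hnpos.ne']
    have h1 := Real.log_le_sub_one_of_pos (div_pos hRpos hR'pos)
    rw [Real.log_div hRpos.ne' hR'pos.ne'] at h1
    have h2 : R / R' - 1 = (R - R') / R' := by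
      field_simp
    linarith
  have hDiv : (R - R') / R' ≤ 2 * ω^2 / (C' * nn) :=
    div_le_div₀ (by positivity) hD2 (mul_pos hC' hnpos) hR'
  have h3 : (nn/2) * (Real.log (R/nn) - Real.log (R'/nn)) ≤ (nn/2) * (2 * ω^2 / (C' * nn)) :=
    mul_le_mul_of_nonneg_left (le_trans hlog hDiv) (by positivity)
  have h4 : (nn/2) * (2 * ω^2 / (C' * nn)) = ω^2 / C' := by
    field_simp
  have h6 : 0 < ω^2 / C' := by positivity
  have h7 : 2 * ω^2 / C' = 2 * (ω^2 / C') := by ring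
  rw [h4] at h3
  rw [mul_sub] at h3
  linarith

set_option maxHeartbeats 2000000 in
/-- Explicit form of Proposition 6.2(a): if the signal has no change point in
the local window `(c_-, c_+]` around a candidate `c₀ ∉ A`, then adding `c₀` to
`A` increases the Schwarz criterion, provided `C' n ≤ RSS(A ∪ {c₀}; x)` and
`ξ > 2ω²/C'`. -/
theorem sc_increases_spurious_candidate
    (n : ℕ) (hn : 1 ≤ n) (ξ C' ω : ℝ) (hξ : 0 < ξ) (hC' : 0 < C') (hω : 0 < ω)
    (f ε x : ℕ → ℝ) (hx : ∀ t, x t = f t + ε t) (hε : UIB ε n ω)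
    (A : Finset ℕ) (hA : A ⊆ Finset.Icc 1 (n - 1))
    (c₀ : ℕ) (hc₀ : c₀ ∈ Finset.Icc 1 (n - 1)) (hc₀A : c₀ ∉ A)
    (cm cp : ℕ)
    (hcm1 : cm < c₀) (hcm2 : cm ∈ insert 0 A)
    (hcm3 : ∀ a ∈ insert 0 A, a < c₀ → a ≤ cm)
    (hcp1 : c₀ < cp) (hcp2 : cp ∈ insert n A)
    (hcp3 : ∀ a ∈ insert n A, c₀ < a → cp ≤ a)
    (hfconst : ∀ t ∈ Finset.Ioc cm cp, ∀ t' ∈ Finset.Ioc cm cp, f t = f t')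
    (hRSS : C' * n ≤ RSS x n (insert c₀ A))
    (hξω : 2 * ω ^ 2 / C' < ξ) :
    SC x n ξ A < SC x n ξ (insert c₀ A) := by
  set A' := insert c₀ A with hA'
  obtain ⟨hc₀1, hc₀n1⟩ := Finset.mem_Icc.mp hc₀
  have hc₀n : c₀ < n := lt_of_le_of_lt hc₀n1 (Nat.sub_lt hn Nat.one_pos)
  have hcpn : cp ≤ n := by
    rcases Finset.mem_insert.mp hcp2 with h | h
    · exact h.le
    · exact le_trans (Finset.mem_Icc.mp (hA h)).2 (Nat.sub_le n 1)
  -- segment identification lemmas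
  have hseg1 : ∀ t ∈ Finset.Ioc cm cp, lbd A t = cm ∧ ubd A n t = cp := by
    intro t ht
    obtain ⟨ht1, ht2⟩ := Finset.mem_Ioc.mp ht
    constructor
    · apply lbd_eq_of A t cm hcm2 ht1
      intro a ha hat
      rcases lt_or_ge a c₀ with h | h
      · exact hcm3 a ha h
      · exfalso
        have hane : a ≠ c₀ := by
          rcases Finset.mem_insert.mp ha with h0 | h0
          · omega
          · exact fun he => hc₀A (he ▸ h0)
        have haA : a ∈ A := by
          rcases Finset.mem_insert.mp ha with h0 | h0
          · omega
          · exact h0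
        have := hcp3 a (Finset.mem_insert_of_mem haA) (lt_of_le_of_ne h (Ne.symm hane))
        omega
    · apply ubd_eq_of A n t cp hcp2 ht2
      intro a ha hat
      rcases Finset.mem_insert.mp ha with h0 | h0
      · omega
      · rcases lt_or_ge c₀ a with h | h
        · exact hcp3 a (Finset.mem_insert_of_mem h0) h
        · exfalso
          have hane : a ≠ c₀ := fun he => hc₀A (he ▸ h0)
          have : a < c₀ := lt_of_le_of_ne h hane
          have := hcm3 a (Finset.mem_insert_of_mem h0) this
          omega
  have hseg2 : ∀ t ∈ Finset.Ioc cm c₀, lbd A' t = cm ∧ ubd A' n t = c₀ := by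
    intro t ht
    obtain ⟨ht1, ht2⟩ := Finset.mem_Ioc.mp ht
    constructor
    · apply lbd_eq_of A' t cm (by
        rcases Finset.mem_insert.mp hcm2 with h | h
        · rw [h]; exact Finset.mem_insert_self 0 _
        · exact Finset.mem_insert_of_mem (Finset.mem_insert_of_mem h)) ht1
      intro a ha hat
      rcases Finset.mem_insert.mp ha with h0 | h0
      · omega
      · rcases Finset.mem_insert.mp h0 with h1 | h1
        · omega
        · exact hcm3 a (Finset.mem_insert_of_mem h1) (by omega)
    · apply ubd_eq_of A' n t c₀
        (Finset.mem_insert_of_mem (Finset.mem_insert_self c₀ A)) ht2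
      intro a ha hat
      rcases Finset.mem_insert.mp ha with h0 | h0
      · omega
      · rcases Finset.mem_insert.mp h0 with h1 | h1
        · omega
        · by_contra hlt
          push_neg at hlt
          have := hcm3 a (Finset.mem_insert_of_mem h1) hlt
          omega
  have hseg3 : ∀ t ∈ Finset.Ioc c₀ cp, lbd A' t = c₀ ∧ ubd A' n t = cp := by
    intro t ht
    obtain ⟨ht1, ht2⟩ := Finset.mem_Ioc.mp ht
    constructor
    · apply lbd_eq_of A' t c₀ (Finset.mem_insert_of_mem (Finset.mem_insert_self c₀ A)) ht1
      intro a ha hat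
      rcases Finset.mem_insert.mp ha with h0 | h0
      · omega
      · rcases Finset.mem_insert.mp h0 with h1 | h1
        · omega
        · by_contra hlt
          push_neg at hlt
          have := hcp3 a (Finset.mem_insert_of_mem h1) hlt
          omega
    · apply ubd_eq_of A' n t cp (by
        rcases Finset.mem_insert.mp hcp2 with h | h
        · rw [h]; exact Finset.mem_insert_self n _
        · exact Finset.mem_insert_of_mem (Finset.mem_insert_of_mem h)) ht2
      intro a ha hat
      rcases Finset.mem_insert.mp ha with h0 | h0
      · exact h0 ▸ hcpn
      · rcases Finset.mem_insert.mp h0 with h1 | h1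
        · omega
        · exact hcp3 a (Finset.mem_insert_of_mem h1) (by omega)
  have hout : ∀ t ∈ Finset.Icc 1 n \ Finset.Ioc cm cp,
      lbd A' t = lbd A t ∧ ubd A' n t = ubd A n t := by
    intro t ht
    obtain ⟨htIcc, htout⟩ := Finset.mem_sdiff.mp ht
    obtain ⟨ht1, ht2⟩ := Finset.mem_Icc.mp htIcc
    rw [Finset.mem_Ioc] at htout
    push_neg at htout
    rcases le_or_gt t cm with hcase | hcase
    · -- t ≤ cm; cm ∈ A since cm ≥ t ≥ 1
      have hcmA : cm ∈ A := by
        rcases Finset.mem_insert.mp hcm2 with h | h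
        · omega
        · exact h
      constructor
      · rw [lbd, lbd, hA', Finset.insert_comm, Finset.filter_insert,
          if_neg (by omega : ¬ c₀ < t)]
      · rw [ubd, ubd, hA', Finset.insert_comm, Finset.filter_insert,
          if_pos (by omega : t ≤ c₀), Finset.min_insert]
        congr 1
        apply inf_eq_right.mpr
        calc ((insert n A).filter (fun a => t ≤ a)).min
            ≤ (cm : WithTop ℕ) := Finset.min_le (Finset.mem_filter.mpr
              ⟨Finset.mem_insert_of_mem hcmA, hcase⟩)
          _ ≤ (c₀ : WithTop ℕ) := WithTop.coe_le_coe.mpr hcm1.le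
    · have hcplt : cp < t := htout hcase
      have hcpA : cp ∈ A := by
        rcases Finset.mem_insert.mp hcp2 with h | h
        · omega
        · exact h
      constructor
      · rw [lbd, lbd, hA', Finset.insert_comm, Finset.filter_insert,
          if_pos (by omega : c₀ < t), Finset.max_insert]
        congr 1
        refine sup_eq_right.mpr (le_trans ?_ (Finset.le_max
          (Finset.mem_filter.mpr ⟨Finset.mem_insert_of_mem hcpA, hcplt⟩)))
        exact WithBot.coe_le_coe.mpr hcp1.le
      · rw [ubd, ubd, hA', Finset.insert_comm, Finset.filter_insert,
          if_neg (by omega : ¬ t ≤ c₀)]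
  -- real lengths
  set L₁ : ℝ := (c₀ : ℝ) - cm with hL₁def
  set L₂ : ℝ := (cp : ℝ) - c₀ with hL₂def
  set L : ℝ := (cp : ℝ) - cm with hLdef
  have hL₁ : 0 < L₁ := by
    rw [hL₁def]
    exact sub_pos.mpr (Nat.cast_lt.mpr hcm1)
  have hL₂ : 0 < L₂ := by
    rw [hL₂def]
    exact sub_pos.mpr (Nat.cast_lt.mpr hcp1)
  have hLsum : L = L₁ + L₂ := by rw [hLdef, hL₁def, hL₂def]; ring
  have hLpos : 0 < L := by rw [hLsum]; exact add_pos hL₁ hL₂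
  set μ := segMean x cm cp with hμdef
  set μ₁ := segMean x cm c₀ with hμ₁def
  set μ₂ := segMean x c₀ cp with hμ₂def
  -- RSS decomposition
  have hwinsub : Finset.Ioc cm cp ⊆ Finset.Icc 1 n := by
    intro t ht
    obtain ⟨h1, h2⟩ := Finset.mem_Ioc.mp ht
    exact Finset.mem_Icc.mpr ⟨by omega, le_trans h2 hcpn⟩
  have hsplitA : RSS x n A
      = (∑ t ∈ Finset.Icc 1 n \ Finset.Ioc cm cp,
          (x t - segMean x (lbd A t) (ubd A n t)) ^ 2)
        + ∑ t ∈ Finset.Ioc cm cp, (x t - μ) ^ 2 := by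
    rw [RSS, ← Finset.sum_sdiff hwinsub]
    congr 1
    apply Finset.sum_congr rfl
    intro t ht
    rw [(hseg1 t ht).1, (hseg1 t ht).2]
  have hsplitA' : RSS x n A'
      = (∑ t ∈ Finset.Icc 1 n \ Finset.Ioc cm cp,
          (x t - segMean x (lbd A t) (ubd A n t)) ^ 2)
        + (∑ t ∈ Finset.Ioc cm c₀, (x t - μ₁) ^ 2
           + ∑ t ∈ Finset.Ioc c₀ cp, (x t - μ₂) ^ 2) := by
    rw [RSS, ← Finset.sum_sdiff hwinsub]
    refine congrArg₂ (· + ·) ?_ ?_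
    · apply Finset.sum_congr rfl
      intro t ht
      rw [(hout t ht).1, (hout t ht).2]
    · rw [← Finset.sum_Ioc_consecutive
        (fun t => (x t - segMean x (lbd A' t) (ubd A' n t)) ^ 2) hcm1.le hcp1.le]
      congr 1
      · apply Finset.sum_congr rfl
        intro t ht
        rw [(hseg2 t ht).1, (hseg2 t ht).2]
      · apply Finset.sum_congr rfl
        intro t ht
        rw [(hseg3 t ht).1, (hseg3 t ht).2]
  -- the key gain identity
  have hsum1 := sum_sq_dev x cm c₀ hcm1 μ
  have hsum2 := sum_sq_dev x c₀ cp hcp1 μ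
  have hsplitwin : ∑ t ∈ Finset.Ioc cm cp, (x t - μ) ^ 2
      = ∑ t ∈ Finset.Ioc cm c₀, (x t - μ) ^ 2 + ∑ t ∈ Finset.Ioc c₀ cp, (x t - μ) ^ 2 :=
    (Finset.sum_Ioc_consecutive (fun t => (x t - μ) ^ 2) hcm1.le hcp1.le).symm
  set D : ℝ := RSS x n A - RSS x n A' with hDdef
  have hD : D = L₁ * (μ₁ - μ)^2 + L₂ * (μ₂ - μ)^2 := by
    rw [hDdef, hsplitA, hsplitA', hsplitwin, hsum1, hsum2]
    ring
  -- mean decomposition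
  have hμsum : L * μ = L₁ * μ₁ + L₂ * μ₂ := by
    rw [← sum_eq_mean x cm cp (hcm1.trans hcp1), ← sum_eq_mean x cm c₀ hcm1,
      ← sum_eq_mean x c₀ cp hcp1]
    exact (Finset.sum_Ioc_consecutive x hcm1.le hcp1.le).symm
  have hDform : D = (L₁ * L₂ / L) * (μ₁ - μ₂)^2 := by
    rw [hD, hLsum]
    exact alg_gain L₁ L₂ μ₁ μ₂ μ hL₁ hL₂ (by rw [← hLsum]; exact hμsum)
  have hD0 : 0 ≤ D := by
    rw [hDform]
    exact mul_nonneg (le_of_lt (div_pos (mul_pos hL₁ hL₂) hLpos)) (sq_nonneg _)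
  -- bound μ₁ - μ₂ via UIB
  have hconst : ∀ s e : ℕ, cm ≤ s → s < e → e ≤ cp →
      segMean x s e = f cp + segMean ε s e := by
    intro s e hs hse he
    have hfs : ∑ t ∈ Finset.Ioc s e, f t = ((e:ℝ) - s) * f cp := by
      rw [Finset.sum_congr rfl (fun t ht => by
        obtain ⟨h1, h2⟩ := Finset.mem_Ioc.mp ht
        exact hfconst t (Finset.mem_Ioc.mpr ⟨by omega, by omega⟩) cp
          (Finset.mem_Ioc.mpr ⟨by omega, le_rfl⟩)), Finset.sum_const,
        nsmul_eq_mul, Nat.card_Ioc, Nat.cast_sub hse.le]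
    have hne : ((e:ℝ) - s) ≠ 0 := (sub_pos.mpr (Nat.cast_lt.mpr hse)).ne'
    rw [segMean, segMean, Finset.sum_congr rfl (fun t _ => hx t),
      Finset.sum_add_distrib, hfs, add_div, mul_div_cancel_left₀ _ hne]
  have hμ₁ε : μ₁ = f cp + segMean ε cm c₀ := hconst cm c₀ le_rfl hcm1 hcp1.le
  have hμ₂ε : μ₂ = f cp + segMean ε c₀ cp := hconst c₀ cp hcm1.le hcp1 le_rfl
  set a := Real.sqrt L₁ with hadef
  set b := Real.sqrt L₂ with hbdef
  have ha : 0 < a := Real.sqrt_pos.mpr hL₁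
  have hb : 0 < b := Real.sqrt_pos.mpr hL₂
  have ha2 : a^2 = L₁ := Real.sq_sqrt hL₁.le
  have hb2 : b^2 = L₂ := Real.sq_sqrt hL₂.le
  have habs : ∀ s e : ℕ, s < e → e ≤ n →
      |segMean ε s e| ≤ ω / Real.sqrt ((e:ℝ) - s) := by
    intro s e hse hen
    have hpos : (0:ℝ) < (e:ℝ) - s := sub_pos.mpr (Nat.cast_lt.mpr hse)
    have hs : 0 < Real.sqrt ((e:ℝ) - s) := Real.sqrt_pos.mpr hpos
    rw [segMean, abs_div, abs_of_pos hpos]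
    calc |∑ t ∈ Finset.Ioc s e, ε t| / ((e:ℝ) - s)
        ≤ (ω * Real.sqrt ((e:ℝ) - s)) / ((e:ℝ) - s) := by
          gcongr
          exact hε s e hse hen
      _ = ω / Real.sqrt ((e:ℝ) - s) := by
          rw [div_eq_div_iff hpos.ne' hs.ne', mul_assoc, Real.mul_self_sqrt hpos.le]
  have habs1 : |segMean ε cm c₀| ≤ ω / a := habs cm c₀ hcm1 (le_trans hc₀n1 (Nat.sub_le n 1))
  have habs2 : |segMean ε c₀ cp| ≤ ω / b := habs c₀ cp hcp1 hcpn
  have hδ : |μ₁ - μ₂| ≤ ω / a + ω / b := by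
    rw [hμ₁ε, hμ₂ε]
    calc |(f cp + segMean ε cm c₀) - (f cp + segMean ε c₀ cp)|
        = |segMean ε cm c₀ - segMean ε c₀ cp| := by ring_nf
      _ ≤ |segMean ε cm c₀| + |segMean ε c₀ cp| := abs_sub _ _
      _ ≤ ω / a + ω / b := add_le_add habs1 habs2
  have hδ2 : (μ₁ - μ₂)^2 ≤ (ω / a + ω / b)^2 := by
    rw [← sq_abs (μ₁ - μ₂)]
    apply pow_le_pow_left₀ (abs_nonneg _) hδ
  have hD2 : D ≤ 2 * ω^2 := by
    rw [hDform]
    calc L₁ * L₂ / L * (μ₁ - μ₂)^2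
        ≤ L₁ * L₂ / L * (ω / a + ω / b)^2 :=
          mul_le_mul_of_nonneg_left hδ2 (le_of_lt (div_pos (mul_pos hL₁ hL₂) hLpos))
      _ ≤ 2 * ω^2 := by
          rw [hLsum, ← ha2, ← hb2]
          exact alg_two_omega a b ω ha hb
  -- final comparison of Schwarz criteria
  have hnR : (1:ℝ) ≤ (n:ℝ) := by exact_mod_cast hn
  have hReq : RSS x n A = RSS x n A' + D := by rw [hDdef]; ring
  have hfin := sc_final (RSS x n A) (RSS x n A') (n:ℝ) ξ C' ω hnR hC' hω hRSS
    (by rw [hReq]; linarith only [hD0]) (by rw [hReq]; linarith only [hD2]) hξω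
  rw [SC, SC, Finset.card_insert_of_notMem hc₀A]
  push_cast
  linarith only [hfin, hξ]
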